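/- arXiv:0806.2377 — 4 statements merged into one kernel-verified Lean document; each statement's English description precedes it below -/
import Mathlib

section
/- Let g ≥ 1, let U ⊆ ℂ^g be open, let σ : (Fin g → ℂ) → ℂ be analytic on U, and let u ∈ U with σ(u) ≠ 0. Then for any six indices i,j,k,l,m,n the 6-index Q-function satisfies Q_{ijklmn}(u) = ℘_{ijklmn}(u) − 2·Σ ℘_{ab}(u)·℘_{cdef}(u) + 4·Σ ℘_{ab}(u)·℘_{cd}(u)·℘_{ef}(u), where the first sum runs over all 15 ways of choosing a two-element subset {a,b} of the index multiset {i,j,k,l,m,n} (with {c,d,e,f} the remaining four indices), namely the terms ℘_{ij}℘_{klmn}, ℘_{ik}℘_{jlmn}, ℘_{il}℘_{jkmn}, ℘_{im}℘_{jkln}, ℘_{in}℘_{jklm}, ℘_{jk}℘_{ilmn}, ℘_{jl}℘_{ikmn}, ℘_{jm}℘_{ikln}, ℘_{jn}℘_{iklm}, ℘_{kl}℘_{ijmn}, ℘_{km}℘_{ijln}, ℘_{kn}℘_{ijlm}, ℘_{lm}℘_{ijkn}, ℘_{ln}℘_{ijkm}, ℘_{mn}℘_{ijkl}, and the second sum runs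 over all 15 partitions of {i,j,k,l,m,n} into three pairs (perfect matchings). -/
open scoped BigOperators

/-- Partial derivative in the `i`-th coordinate direction. -/
noncomputable def pd {g : ℕ} (i : Fin g) (f : (Fin g → ℂ) → ℂ) : (Fin g → ℂ) → ℂ :=
  fun u => fderiv ℂ f u (Pi.single i 1)

/-- Iterated partial derivatives along a list of indices. -/
noncomputable def pdList {g : ℕ} (l : List (Fin g)) (f : (Fin g → ℂ) → ℂ) : (Fin g → ℂ) → ℂ :=
  l.foldr pd f

/-- The 2-index Kleinian ℘-function `℘_{ij} = (∂_iσ·∂_jσ − σ·∂_i∂_jσ)/σ²`. -/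
noncomputable def wp2 {g : ℕ} (σ : (Fin g → ℂ) → ℂ) (i j : Fin g) : (Fin g → ℂ) → ℂ :=
  fun u => (pd i σ u * pd j σ u - σ u * pd i (pd j σ) u) / (σ u) ^ 2

/-- The n-index Kleinian ℘-function `℘_{i j i₃ … iₙ} = ∂_{i₃}⋯∂_{iₙ} ℘_{ij}`. -/
noncomputable def wpN {g : ℕ} (σ : (Fin g → ℂ) → ℂ) (i j : Fin g) (rest : List (Fin g)) :
    (Fin g → ℂ) → ℂ :=
  pdList rest (wp2 σ i j)

/-- The diagonal value `(Δ_{i₁}⋯Δ_{iₙ} σ(u)σ(v))|_{v=u}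
    = Σ_{S⊆{1,…,n}} (−1)^{|S|}·((∏_{k∈S}∂_{i_k})σ)(u)·((∏_{k∉S}∂_{i_k})σ)(u)`. -/
noncomputable def hirotaDiag {g : ℕ} (σ : (Fin g → ℂ) → ℂ) (l : List (Fin g))
    (u : Fin g → ℂ) : ℂ :=
  ∑ S : Finset (Fin l.length),
    (-1 : ℂ) ^ S.card
      * pdList (((List.finRange l.length).filter (fun k => decide (k ∈ S))).map l.get) σ u
      * pdList (((List.finRange l.length).filter (fun k => decide (k ∉ S))).map l.get) σ u

/-- The n-index Q-function (n even): `Q_{i₁…iₙ}(u) = −(1/(2σ(u)²))·(Δ_{i₁}⋯Δ_{iₙ}σ(u)σ(v))|_{v=u}`. -/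
noncomputable def Qfun {g : ℕ} (σ : (Fin g → ℂ) → ℂ) (l : List (Fin g))
    (u : Fin g → ℂ) : ℂ :=
  -(1 / (2 * (σ u) ^ 2)) * hirotaDiag σ l u


open scoped Topology

set_option maxRecDepth 100000
set_option maxHeartbeats 4000000

section Aux

variable {g : ℕ} {f f₁ f₂ h : (Fin g → ℂ) → ℂ} {u : Fin g → ℂ} {a b : Fin g}

lemma aux_pd_analyticAt (hf : AnalyticAt ℂ f u) (a : Fin g) : AnalyticAt ℂ (pd a f) u := by
  have h1 : AnalyticAt ℂ (fderiv ℂ f) u := hf.fderiv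
  exact ((ContinuousLinearMap.apply ℂ ℂ (Pi.single a 1 : Fin g → ℂ)).analyticAt _).comp h1

lemma aux_pdList_analyticAt (hf : AnalyticAt ℂ f u) (l : List (Fin g)) :
    AnalyticAt ℂ (pdList l f) u := by
  induction l with
  | nil => exact hf
  | cons a l ih => exact aux_pd_analyticAt ih a

lemma aux_pd_congr (h : f₁ =ᶠ[𝓝 u] f₂) : pd a f₁ =ᶠ[𝓝 u] pd a f₂ := by
  filter_upwards [Filter.EventuallyEq.fderiv (𝕜 := ℂ) h] with x hx
  simp only [pd, hx]

lemma aux_pdList_congr (l : List (Fin g)) (h : f₁ =ᶠ[𝓝 u] f₂) :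
    pdList l f₁ =ᶠ[𝓝 u] pdList l f₂ := by
  induction l with
  | nil => exact h
  | cons a l ih => exact aux_pd_congr ih

lemma aux_pd_comm (hf : AnalyticAt ℂ f u) : pd a (pd b f) u = pd b (pd a f) u := by
  have hsymm : IsSymmSndFDerivAt ℂ f u :=
    (hf.contDiffAt (n := 2)).isSymmSndFDerivAt (by simp [minSmoothness])
  have hd : DifferentiableAt ℂ (fderiv ℂ f) u := hf.fderiv.differentiableAt
  have key : ∀ v w : Fin g → ℂ, fderiv ℂ (fun x => fderiv ℂ f x v) u w
      = fderiv ℂ (fderiv ℂ f) u w v := by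
    intro v w
    rw [fderiv_clm_apply hd (differentiableAt_const v)]
    simp
  show fderiv ℂ (fun x => fderiv ℂ f x (Pi.single b 1)) u (Pi.single a 1)
      = fderiv ℂ (fun x => fderiv ℂ f x (Pi.single a 1)) u (Pi.single b 1)
  rw [key, key]
  exact hsymm _ _

lemma aux_pd_comm_ev (hf : AnalyticAt ℂ f u) : pd a (pd b f) =ᶠ[𝓝 u] pd b (pd a f) := by
  filter_upwards [hf.eventually_analyticAt] with x hx
  exact aux_pd_comm hx

lemma aux_pdList_perm (hf : AnalyticAt ℂ f u) {l₁ l₂ : List (Fin g)} (hp : l₁.Perm l₂) :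
    pdList l₁ f =ᶠ[𝓝 u] pdList l₂ f := by
  induction hp with
  | nil => rfl
  | cons a _ ih => exact aux_pd_congr ih
  | swap a b l => exact aux_pd_comm_ev (aux_pdList_analyticAt hf l)
  | trans _ _ ih₁ ih₂ => exact ih₁.trans ih₂

lemma aux_pd_neg (f : (Fin g → ℂ) → ℂ) (a : Fin g) :
    pd a (fun x => -(f x)) = fun x => -(pd a f x) := by
  funext x
  simp only [pd, fderiv_neg]
  simp

lemma aux_pdList_neg (f : (Fin g → ℂ) → ℂ) (l : List (Fin g)) :
    pdList l (fun x => -(f x)) = fun x => -(pdList l f x) := by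
  induction l with
  | nil => rfl
  | cons a l ih =>
      show pd a (pdList l fun x => -(f x)) = _
      rw [ih, aux_pd_neg]
      rfl

inductive PE (g : ℕ) where
  | zero : PE g
  | one : PE g
  | atom : List (Fin g) → PE g
  | add : PE g → PE g → PE g
  | mul : PE g → PE g → PE g

noncomputable def PE.eval (h : (Fin g → ℂ) → ℂ) : PE g → (Fin g → ℂ) → ℂ
  | .zero => fun _ => 0
  | .one => fun _ => 1
  | .atom l => pdList l h
  | .add p q => fun x => PE.eval h p x + PE.eval h q x
  | .mul p q => fun x => PE.eval h p x * PE.eval h q x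

def PE.D {g : ℕ} (a : Fin g) : PE g → PE g
  | .zero => .zero
  | .one => .zero
  | .atom l => .atom (a :: l)
  | .add p q => .add (p.D a) (q.D a)
  | .mul p q => .add (.mul (p.D a) q) (.mul p (q.D a))

lemma aux_eval_analyticAt (hh : AnalyticAt ℂ h u) : ∀ p : PE g, AnalyticAt ℂ (PE.eval h p) u
  | .zero => analyticAt_const
  | .one => analyticAt_const
  | .atom l => aux_pdList_analyticAt hh l
  | .add p q => (aux_eval_analyticAt hh p).add (aux_eval_analyticAt hh q)
  | .mul p q => (aux_eval_analyticAt hh p).mul (aux_eval_analyticAt hh q)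

lemma aux_pd_eval (hh : AnalyticAt ℂ h u) (a : Fin g) : ∀ p : PE g,
    pd a (PE.eval h p) =ᶠ[𝓝 u] PE.eval h (p.D a)
  | .zero => by
      refine Filter.Eventually.of_forall fun x => ?_
      simp [pd, PE.eval, PE.D, fderiv_const]
  | .one => by
      refine Filter.Eventually.of_forall fun x => ?_
      simp [pd, PE.eval, PE.D, fderiv_const]
  | .atom l => Filter.EventuallyEq.rfl
  | .add p q => by
      have ihp := aux_pd_eval hh a p
      have ihq := aux_pd_eval hh a q
      filter_upwards [ihp, ihq, (aux_eval_analyticAt hh p).eventually_analyticAt,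
        (aux_eval_analyticAt hh q).eventually_analyticAt] with x h1 h2 h3 h4
      show pd a (fun y => PE.eval h p y + PE.eval h q y) x = _
      have : fderiv ℂ (fun y => PE.eval h p y + PE.eval h q y) x
          = fderiv ℂ (PE.eval h p) x + fderiv ℂ (PE.eval h q) x :=
        fderiv_add h3.differentiableAt h4.differentiableAt
      simp only [pd] at h1 h2 ⊢
      rw [this]
      simp [PE.eval, PE.D, h1, h2]
  | .mul p q => by
      have ihp := aux_pd_eval hh a p
      have ihq := aux_pd_eval hh a q
      filter_upwards [ihp, ihq, (aux_eval_analyticAt hh p).eventually_analyticAt,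
        (aux_eval_analyticAt hh q).eventually_analyticAt] with x h1 h2 h3 h4
      show pd a (fun y => PE.eval h p y * PE.eval h q y) x = _
      have : fderiv ℂ (fun y => PE.eval h p y * PE.eval h q y) x
          = PE.eval h p x • fderiv ℂ (PE.eval h q) x
            + PE.eval h q x • fderiv ℂ (PE.eval h p) x :=
        fderiv_mul h3.differentiableAt h4.differentiableAt
      simp only [pd] at h1 h2 ⊢
      rw [this]
      simp [PE.eval, PE.D, h1, h2]
      ring

def bell {g : ℕ} : List (Fin g) → PE g
  | [] => .one
  | a :: L => .add (.mul (.atom [a]) (bell L)) ((bell L).D a)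

lemma aux_pdList_exp (hh : AnalyticAt ℂ h u) (L : List (Fin g)) :
    pdList L (fun x => Complex.exp (h x))
      =ᶠ[𝓝 u] fun x => Complex.exp (h x) * PE.eval h (bell L) x := by
  induction L with
  | nil =>
      refine Filter.Eventually.of_forall fun x => ?_
      simp [pdList, bell, PE.eval]
  | cons a L ih =>
      have step1 : pdList (a :: L) (fun x => Complex.exp (h x))
          =ᶠ[𝓝 u] pd a (fun x => Complex.exp (h x) * PE.eval h (bell L) x) := by
        have : pd a (pdList L (fun x => Complex.exp (h x)))
            =ᶠ[𝓝 u] pd a (fun x => Complex.exp (h x) * PE.eval h (bell L) x) := by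
          filter_upwards [Filter.EventuallyEq.fderiv (𝕜 := ℂ) ih] with x hx
          simp only [pd, hx]
        exact this
      refine step1.trans ?_
      have hP := aux_eval_analyticAt hh (bell L)
      filter_upwards [aux_pd_eval hh a (bell L), hh.eventually_analyticAt,
        hP.eventually_analyticAt] with x h1 h2 h3
      have hde : HasFDerivAt (fun y => Complex.exp (h y))
          (Complex.exp (h x) • fderiv ℂ h x) x := h2.differentiableAt.hasFDerivAt.cexp
      have hmul : fderiv ℂ (fun y => Complex.exp (h y) * PE.eval h (bell L) y) x
          = Complex.exp (h x) • fderiv ℂ (PE.eval h (bell L)) x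
            + PE.eval h (bell L) x • fderiv ℂ (fun y => Complex.exp (h y)) x :=
        fderiv_mul hde.differentiableAt h3.differentiableAt
      show fderiv ℂ (fun y => Complex.exp (h y) * PE.eval h (bell L) y) x (Pi.single a 1) = _
      rw [hmul, hde.fderiv]
      simp only [pd] at h1
      simp only [bell, PE.eval, ContinuousLinearMap.add_apply, ContinuousLinearMap.smul_apply,
        smul_eq_mul, h1]
      have h4 : fderiv ℂ h x (Pi.single a 1) = pdList [a] h x := rfl
      rw [h4]
      ring

lemma aux_bell1 (x : Fin g → ℂ) (a : Fin g) :
    PE.eval h (bell [a]) x = pdList [a] h x := by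
  simp [bell, PE.eval, PE.D]

lemma aux_bell2 (x : Fin g → ℂ) (a b : Fin g) :
    PE.eval h (bell [a, b]) x = pdList [a] h x * pdList [b] h x + pdList [a, b] h x := by
  simp [bell, PE.eval, PE.D]
  try ring

lemma aux_wp2_ev {σ : (Fin g → ℂ) → ℂ} (hh : AnalyticAt ℂ h u)
    (hev : σ =ᶠ[𝓝 u] fun x => Complex.exp (h x)) (a b : Fin g) :
    wp2 σ a b =ᶠ[𝓝 u] fun x => -(pdList [a, b] h x) := by
  have e1 := (aux_pdList_congr [a] hev).trans (aux_pdList_exp hh [a])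
  have e2 := (aux_pdList_congr [b] hev).trans (aux_pdList_exp hh [b])
  have e12 := (aux_pdList_congr [a, b] hev).trans (aux_pdList_exp hh [a, b])
  filter_upwards [e1, e2, e12, hev] with x h1 h2 h3 h4
  have hpa : pd a σ x = Complex.exp (h x) * pdList [a] h x := by
    have := h1; rw [aux_bell1] at this; exact this
  have hpb : pd b σ x = Complex.exp (h x) * pdList [b] h x := by
    have := h2; rw [aux_bell1] at this; exact this
  have hpab : pd a (pd b σ) x
      = Complex.exp (h x) * (pdList [a] h x * pdList [b] h x + pdList [a, b] h x) := by
    have := h3; rw [aux_bell2] at this; exact this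
  show (pd a σ x * pd b σ x - σ x * pd a (pd b σ) x) / (σ x) ^ 2 = -(pdList [a, b] h x)
  rw [hpa, hpb, hpab, h4]
  have hne : Complex.exp (h x) ≠ 0 := Complex.exp_ne_zero _
  field_simp
  ring

lemma aux_wpN_eq {σ : (Fin g → ℂ) → ℂ} (hh : AnalyticAt ℂ h u)
    (hev : σ =ᶠ[𝓝 u] fun x => Complex.exp (h x)) (a b : Fin g) (rest : List (Fin g)) :
    wpN σ a b rest u = -(pdList (a :: b :: rest) h u) := by
  have s1 : wpN σ a b rest u = pdList rest (fun x => -(pdList [a, b] h x)) u :=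
    (aux_pdList_congr rest (aux_wp2_ev hh hev a b)).eq_of_nhds
  rw [s1, aux_pdList_neg]
  have s2 : pdList rest (pdList [a, b] h) = pdList (rest ++ [a, b]) h :=
    List.foldr_append.symm
  rw [s2]
  show -(pdList (rest ++ [a, b]) h u) = -(pdList (a :: b :: rest) h u)
  have s3 : pdList (rest ++ [a, b]) h u = pdList ([a, b] ++ rest) h u :=
    (aux_pdList_perm hh (List.perm_append_comm)).eq_of_nhds
  rw [s3]
  rfl

lemma aux_wp2_eq {σ : (Fin g → ℂ) → ℂ} (hh : AnalyticAt ℂ h u)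
    (hev : σ =ᶠ[𝓝 u] fun x => Complex.exp (h x)) (a b : Fin g) :
    wp2 σ a b u = -(pdList [a, b] h u) :=
  (aux_wp2_ev hh hev a b).eq_of_nhds

lemma aux_pdList_sigma {σ : (Fin g → ℂ) → ℂ} (hh : AnalyticAt ℂ h u)
    (hev : σ =ᶠ[𝓝 u] fun x => Complex.exp (h x)) (L : List (Fin g)) :
    pdList L σ u = σ u * PE.eval h (bell L) u := by
  have e := (aux_pdList_congr L hev).trans (aux_pdList_exp hh L)
  rw [e.eq_of_nhds, hev.eq_of_nhds]

lemma aux_sum_fin6 (F : Finset (Fin 6) → ℂ) : ∑ S : Finset (Fin 6), F S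
    = F ∅ + F {0} + F {1} + F {2} + F {3} + F {4} + F {5} + F {0, 1} + F {0, 2} + F {0, 3} + F {0, 4} + F {0, 5} + F {1, 2} + F {1, 3} + F {1, 4} + F {1, 5} + F {2, 3} + F {2, 4} + F {2, 5} + F {3, 4} + F {3, 5} + F {4, 5} + F {0, 1, 2} + F {0, 1, 3} + F {0, 1, 4} + F {0, 1, 5} + F {0, 2, 3} + F {0, 2, 4} + F {0, 2, 5} + F {0, 3, 4} + F {0, 3, 5} + F {0, 4, 5} + F {1, 2, 3} + F {1, 2, 4} + F {1, 2, 5} + F {1, 3, 4} + F {1, 3, 5} + F {1, 4, 5} + F {2, 3, 4} + F {2, 3, 5} + F {2, 4, 5} + F {3, 4, 5} + F {0, 1, 2, 3} + F {0, 1, 2, 4} + F {0, 1, 2, 5} + F {0, 1, 3, 4} + F {0, 1, 3, 5} + F {0, 1, 4, 5} + F {0, 2, 3, 4} + F {0, 2, 3, 5} + F {0, 2, 4, 5} + F {0, 3, 4, 5} + F {1, 2, 3, 4} + F {1, 2, 3, 5} + F {1, 2, 4, 5} + F {1, 3, 4, 5} + F {2, 3, 4, 5} + F {0, 1, 2, 3,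 4} + F {0, 1, 2, 3, 5} + F {0, 1, 2, 4, 5} + F {0, 1, 3, 4, 5} + F {0, 2, 3, 4, 5} + F {1, 2, 3, 4, 5} + F {0, 1, 2, 3, 4, 5} := by
  rw [show (Finset.univ : Finset (Finset (Fin 6))) = {∅, {0}, {1}, {2}, {3}, {4}, {5}, {0, 1}, {0, 2}, {0, 3}, {0, 4}, {0, 5}, {1, 2}, {1, 3}, {1, 4}, {1, 5}, {2, 3}, {2, 4}, {2, 5}, {3, 4}, {3, 5}, {4, 5}, {0, 1, 2}, {0, 1, 3}, {0, 1, 4}, {0, 1, 5}, {0, 2, 3}, {0, 2, 4}, {0, 2, 5}, {0, 3, 4}, {0, 3, 5}, {0, 4, 5}, {1, 2, 3}, {1, 2, 4}, {1, 2, 5}, {1, 3, 4}, {1, 3, 5}, {1, 4, 5}, {2, 3, 4}, {2, 3, 5}, {2, 4, 5}, {3, 4, 5}, {0, 1, 2, 3}, {0, 1, 2, 4}, {0, 1, 2, 5}, {0, 1, 3, 4}, {0, 1, 3, 5}, {0, 1, 4, 5}, {0, 2, 3, 4}, {0, 2, 3, 5}, {0, 2, 4, 5}, {0, 3, 4, 5},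 {1, 2, 3, 4}, {1, 2, 3, 5}, {1, 2, 4, 5}, {1, 3, 4, 5}, {2, 3, 4, 5}, {0, 1, 2, 3, 4}, {0, 1, 2, 3, 5}, {0, 1, 2, 4, 5}, {0, 1, 3, 4, 5}, {0, 2, 3, 4, 5}, {1, 2, 3, 4, 5}, {0, 1, 2, 3, 4, 5}} from by decide]
  rw [Finset.sum_insert (by decide)]
  rw [Finset.sum_insert (by decide)]
  rw [Finset.sum_insert (by decide)]
  rw [Finset.sum_insert (by decide)]
  rw [Finset.sum_insert (by decide)]
  rw [Finset.sum_insert (by decide)]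
  rw [Finset.sum_insert (by decide)]
  rw [Finset.sum_insert (by decide)]
  rw [Finset.sum_insert (by decide)]
  rw [Finset.sum_insert (by decide)]
  rw [Finset.sum_insert (by decide)]
  rw [Finset.sum_insert (by decide)]
  rw [Finset.sum_insert (by decide)]
  rw [Finset.sum_insert (by decide)]
  rw [Finset.sum_insert (by decide)]
  rw [Finset.sum_insert (by decide)]
  rw [Finset.sum_insert (by decide)]
  rw [Finset.sum_insert (by decide)]
  rw [Finset.sum_insert (by decide)]
  rw [Finset.sum_insert (by decide)]
  rw [Finset.sum_insert (by decide)]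
  rw [Finset.sum_insert (by decide)]
  rw [Finset.sum_insert (by decide)]
  rw [Finset.sum_insert (by decide)]
  rw [Finset.sum_insert (by decide)]
  rw [Finset.sum_insert (by decide)]
  rw [Finset.sum_insert (by decide)]
  rw [Finset.sum_insert (by decide)]
  rw [Finset.sum_insert (by decide)]
  rw [Finset.sum_insert (by decide)]
  rw [Finset.sum_insert (by decide)]
  rw [Finset.sum_insert (by decide)]
  rw [Finset.sum_insert (by decide)]
  rw [Finset.sum_insert (by decide)]
  rw [Finset.sum_insert (by decide)]
  rw [Finset.sum_insert (by decide)]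
  rw [Finset.sum_insert (by decide)]
  rw [Finset.sum_insert (by decide)]
  rw [Finset.sum_insert (by decide)]
  rw [Finset.sum_insert (by decide)]
  rw [Finset.sum_insert (by decide)]
  rw [Finset.sum_insert (by decide)]
  rw [Finset.sum_insert (by decide)]
  rw [Finset.sum_insert (by decide)]
  rw [Finset.sum_insert (by decide)]
  rw [Finset.sum_insert (by decide)]
  rw [Finset.sum_insert (by decide)]
  rw [Finset.sum_insert (by decide)]
  rw [Finset.sum_insert (by decide)]
  rw [Finset.sum_insert (by decide)]
  rw [Finset.sum_insert (by decide)]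
  rw [Finset.sum_insert (by decide)]
  rw [Finset.sum_insert (by decide)]
  rw [Finset.sum_insert (by decide)]
  rw [Finset.sum_insert (by decide)]
  rw [Finset.sum_insert (by decide)]
  rw [Finset.sum_insert (by decide)]
  rw [Finset.sum_insert (by decide)]
  rw [Finset.sum_insert (by decide)]
  rw [Finset.sum_insert (by decide)]
  rw [Finset.sum_insert (by decide)]
  rw [Finset.sum_insert (by decide)]
  rw [Finset.sum_insert (by decide)]
  rw [Finset.sum_singleton]
  ring

lemma aux_hirota6 (σ : (Fin g → ℂ) → ℂ) (u : Fin g → ℂ) (i j k l m n : Fin g) :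
    hirotaDiag σ [i, j, k, l, m, n] u
    = (-1 : ℂ) ^ 0 * pdList [] σ u * pdList [i, j, k, l, m, n] σ u
      + (-1 : ℂ) ^ 1 * pdList [i] σ u * pdList [j, k, l, m, n] σ u
      + (-1 : ℂ) ^ 1 * pdList [j] σ u * pdList [i, k, l, m, n] σ u
      + (-1 : ℂ) ^ 1 * pdList [k] σ u * pdList [i, j, l, m, n] σ u
      + (-1 : ℂ) ^ 1 * pdList [l] σ u * pdList [i, j, k, m, n] σ u
      + (-1 : ℂ) ^ 1 * pdList [m] σ u * pdList [i, j, k, l, n] σ u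
      + (-1 : ℂ) ^ 1 * pdList [n] σ u * pdList [i, j, k, l, m] σ u
      + (-1 : ℂ) ^ 2 * pdList [i, j] σ u * pdList [k, l, m, n] σ u
      + (-1 : ℂ) ^ 2 * pdList [i, k] σ u * pdList [j, l, m, n] σ u
      + (-1 : ℂ) ^ 2 * pdList [i, l] σ u * pdList [j, k, m, n] σ u
      + (-1 : ℂ) ^ 2 * pdList [i, m] σ u * pdList [j, k, l, n] σ u
      + (-1 : ℂ) ^ 2 * pdList [i, n] σ u * pdList [j, k, l, m] σ u
      + (-1 : ℂ) ^ 2 * pdList [j, k] σ u * pdList [i, l, m, n] σ u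
      + (-1 : ℂ) ^ 2 * pdList [j, l] σ u * pdList [i, k, m, n] σ u
      + (-1 : ℂ) ^ 2 * pdList [j, m] σ u * pdList [i, k, l, n] σ u
      + (-1 : ℂ) ^ 2 * pdList [j, n] σ u * pdList [i, k, l, m] σ u
      + (-1 : ℂ) ^ 2 * pdList [k, l] σ u * pdList [i, j, m, n] σ u
      + (-1 : ℂ) ^ 2 * pdList [k, m] σ u * pdList [i, j, l, n] σ u
      + (-1 : ℂ) ^ 2 * pdList [k, n] σ u * pdList [i, j, l, m] σ u
      + (-1 : ℂ) ^ 2 * pdList [l, m] σ u * pdList [i, j, k, n] σ u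
      + (-1 : ℂ) ^ 2 * pdList [l, n] σ u * pdList [i, j, k, m] σ u
      + (-1 : ℂ) ^ 2 * pdList [m, n] σ u * pdList [i, j, k, l] σ u
      + (-1 : ℂ) ^ 3 * pdList [i, j, k] σ u * pdList [l, m, n] σ u
      + (-1 : ℂ) ^ 3 * pdList [i, j, l] σ u * pdList [k, m, n] σ u
      + (-1 : ℂ) ^ 3 * pdList [i, j, m] σ u * pdList [k, l, n] σ u
      + (-1 : ℂ) ^ 3 * pdList [i, j, n] σ u * pdList [k, l, m] σ u
      + (-1 : ℂ) ^ 3 * pdList [i, k, l] σ u * pdList [j, m, n] σ u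
      + (-1 : ℂ) ^ 3 * pdList [i, k, m] σ u * pdList [j, l, n] σ u
      + (-1 : ℂ) ^ 3 * pdList [i, k, n] σ u * pdList [j, l, m] σ u
      + (-1 : ℂ) ^ 3 * pdList [i, l, m] σ u * pdList [j, k, n] σ u
      + (-1 : ℂ) ^ 3 * pdList [i, l, n] σ u * pdList [j, k, m] σ u
      + (-1 : ℂ) ^ 3 * pdList [i, m, n] σ u * pdList [j, k, l] σ u
      + (-1 : ℂ) ^ 3 * pdList [j, k, l] σ u * pdList [i, m, n] σ u
      + (-1 : ℂ) ^ 3 * pdList [j, k, m] σ u * pdList [i, l, n] σ u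
      + (-1 : ℂ) ^ 3 * pdList [j, k, n] σ u * pdList [i, l, m] σ u
      + (-1 : ℂ) ^ 3 * pdList [j, l, m] σ u * pdList [i, k, n] σ u
      + (-1 : ℂ) ^ 3 * pdList [j, l, n] σ u * pdList [i, k, m] σ u
      + (-1 : ℂ) ^ 3 * pdList [j, m, n] σ u * pdList [i, k, l] σ u
      + (-1 : ℂ) ^ 3 * pdList [k, l, m] σ u * pdList [i, j, n] σ u
      + (-1 : ℂ) ^ 3 * pdList [k, l, n] σ u * pdList [i, j, m] σ u
      + (-1 : ℂ) ^ 3 * pdList [k, m, n] σ u * pdList [i, j, l] σ u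
      + (-1 : ℂ) ^ 3 * pdList [l, m, n] σ u * pdList [i, j, k] σ u
      + (-1 : ℂ) ^ 4 * pdList [i, j, k, l] σ u * pdList [m, n] σ u
      + (-1 : ℂ) ^ 4 * pdList [i, j, k, m] σ u * pdList [l, n] σ u
      + (-1 : ℂ) ^ 4 * pdList [i, j, k, n] σ u * pdList [l, m] σ u
      + (-1 : ℂ) ^ 4 * pdList [i, j, l, m] σ u * pdList [k, n] σ u
      + (-1 : ℂ) ^ 4 * pdList [i, j, l, n] σ u * pdList [k, m] σ u
      + (-1 : ℂ) ^ 4 * pdList [i, j, m, n] σ u * pdList [k, l] σ u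
      + (-1 : ℂ) ^ 4 * pdList [i, k, l, m] σ u * pdList [j, n] σ u
      + (-1 : ℂ) ^ 4 * pdList [i, k, l, n] σ u * pdList [j, m] σ u
      + (-1 : ℂ) ^ 4 * pdList [i, k, m, n] σ u * pdList [j, l] σ u
      + (-1 : ℂ) ^ 4 * pdList [i, l, m, n] σ u * pdList [j, k] σ u
      + (-1 : ℂ) ^ 4 * pdList [j, k, l, m] σ u * pdList [i, n] σ u
      + (-1 : ℂ) ^ 4 * pdList [j, k, l, n] σ u * pdList [i, m] σ u
      + (-1 : ℂ) ^ 4 * pdList [j, k, m, n] σ u * pdList [i, l] σ u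
      + (-1 : ℂ) ^ 4 * pdList [j, l, m, n] σ u * pdList [i, k] σ u
      + (-1 : ℂ) ^ 4 * pdList [k, l, m, n] σ u * pdList [i, j] σ u
      + (-1 : ℂ) ^ 5 * pdList [i, j, k, l, m] σ u * pdList [n] σ u
      + (-1 : ℂ) ^ 5 * pdList [i, j, k, l, n] σ u * pdList [m] σ u
      + (-1 : ℂ) ^ 5 * pdList [i, j, k, m, n] σ u * pdList [l] σ u
      + (-1 : ℂ) ^ 5 * pdList [i, j, l, m, n] σ u * pdList [k] σ u
      + (-1 : ℂ) ^ 5 * pdList [i, k, l, m, n] σ u * pdList [j] σ u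
      + (-1 : ℂ) ^ 5 * pdList [j, k, l, m, n] σ u * pdList [i] σ u
      + (-1 : ℂ) ^ 6 * pdList [i, j, k, l, m, n] σ u * pdList [] σ u := by
  have e0 : hirotaDiag σ [i, j, k, l, m, n] u = ∑ S : Finset (Fin 6),
      ((-1 : ℂ) ^ S.card
        * pdList (((List.finRange 6).filter (fun t => decide (t ∈ S))).map
            [i, j, k, l, m, n].get) σ u
        * pdList (((List.finRange 6).filter (fun t => decide (t ∉ S))).map
            [i, j, k, l, m, n].get) σ u) := rfl
  rw [e0, aux_sum_fin6]
  rfl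

end Aux

/-- the 6-index Q-function in terms of Kleinian ℘-functions. -/
theorem six_index_Q_in_terms_of_wp {g : ℕ} (hg : 1 ≤ g) (U : Set (Fin g → ℂ)) (hU : IsOpen U)
    (σ : (Fin g → ℂ) → ℂ) (hσ : AnalyticOnNhd ℂ σ U) (u : Fin g → ℂ) (hu : u ∈ U)
    (hσ0 : σ u ≠ 0) (i j k l m n : Fin g) :
    Qfun σ [i, j, k, l, m, n] u =
      wpN σ i j [k, l, m, n] u
      - 2 * ( wp2 σ i j u * wpN σ k l [m, n] u
            + wp2 σ i k u * wpN σ j l [m, n] u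
            + wp2 σ i l u * wpN σ j k [m, n] u
            + wp2 σ i m u * wpN σ j k [l, n] u
            + wp2 σ i n u * wpN σ j k [l, m] u
            + wp2 σ j k u * wpN σ i l [m, n] u
            + wp2 σ j l u * wpN σ i k [m, n] u
            + wp2 σ j m u * wpN σ i k [l, n] u
            + wp2 σ j n u * wpN σ i k [l, m] u
            + wp2 σ k l u * wpN σ i j [m, n] u
            + wp2 σ k m u * wpN σ i j [l, n] u
            + wp2 σ k n u * wpN σ i j [l, m] u
            + wp2 σ l m u * wpN σ i j [k, n] u
            + wp2 σ l n u * wpN σ i j [k, m] u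
            + wp2 σ m n u * wpN σ i j [k, l] u )
      + 4 * ( wp2 σ i j u * wp2 σ k l u * wp2 σ m n u
            + wp2 σ i j u * wp2 σ k m u * wp2 σ l n u
            + wp2 σ i j u * wp2 σ k n u * wp2 σ l m u
            + wp2 σ i k u * wp2 σ j l u * wp2 σ m n u
            + wp2 σ i k u * wp2 σ j m u * wp2 σ l n u
            + wp2 σ i k u * wp2 σ j n u * wp2 σ l m u
            + wp2 σ i l u * wp2 σ j k u * wp2 σ m n u
            + wp2 σ i l u * wp2 σ j m u * wp2 σ k n u
            + wp2 σ i l u * wp2 σ j n u * wp2 σ k m u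
            + wp2 σ i m u * wp2 σ j k u * wp2 σ l n u
            + wp2 σ i m u * wp2 σ j l u * wp2 σ k n u
            + wp2 σ i m u * wp2 σ j n u * wp2 σ k l u
            + wp2 σ i n u * wp2 σ j k u * wp2 σ l m u
            + wp2 σ i n u * wp2 σ j l u * wp2 σ k m u
            + wp2 σ i n u * wp2 σ j m u * wp2 σ k l u ) := by
  classical
  have hσu : AnalyticAt ℂ σ u := hσ u hu
  set h : (Fin g → ℂ) → ℂ :=
    fun x => Complex.log (σ u) + Complex.log (σ x / σ u) with hdef
  have hmem : σ u / σ u ∈ Complex.slitPlane := by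
    rw [div_self hσ0]; exact Complex.one_mem_slitPlane
  have hh : AnalyticAt ℂ h u := by
    apply analyticAt_const.add
    exact (hσu.div analyticAt_const hσ0).clog hmem
  have hev : σ =ᶠ[𝓝 u] fun x => Complex.exp (h x) := by
    have hcont : ContinuousAt (fun x => σ x / σ u) u :=
      (hσu.continuousAt).div continuousAt_const hσ0
    have hopen : ∀ᶠ x in 𝓝 u, σ x / σ u ∈ Complex.slitPlane := by
      have : Complex.slitPlane ∈ 𝓝 (σ u / σ u) :=
        Complex.isOpen_slitPlane.mem_nhds hmem
      exact hcont.eventually_mem this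
    filter_upwards [hopen] with x hx
    have hne : σ x / σ u ≠ 0 := Complex.slitPlane_ne_zero hx
    have hx0 : σ x ≠ 0 := by
      intro hz; apply hne; rw [hz]; simp
    rw [hdef]
    rw [Complex.exp_add, Complex.exp_log hσ0, Complex.exp_log hne]
    field_simp
  have hps : ∀ L : List (Fin g), pdList L σ u = σ u * PE.eval h (bell L) u :=
    fun L => aux_pdList_sigma hh hev L
  have hw2 : ∀ a b : Fin g, wp2 σ a b u = -(pdList [a, b] h u) :=
    fun a b => aux_wp2_eq hh hev a b
  have hwN : ∀ (a b : Fin g) (rest : List (Fin g)),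
      wpN σ a b rest u = -(pdList (a :: b :: rest) h u) :=
    fun a b rest => aux_wpN_eq hh hev a b rest
  rw [Qfun, aux_hirota6]
  simp only [hps, hw2, hwN]
  simp only [bell, PE.D, PE.eval]
  field_simp
  ring
end

section
/- Let g ≥ 1, let U ⊆ ℂ^g be open, let σ : (Fin g → ℂ) → ℂ be analytic on U, and let u ∈ U with σ(u) ≠ 0. Then for any four indices i,j,k,l the 4-index Q-function satisfies Q_{ijkl}(u) = ℘_{ijkl}(u) − 2·℘_{ij}(u)·℘_{kl}(u) − 2·℘_{ik}(u)·℘_{jl}(u) − 2·℘_{il}(u)·℘_{jk}(u). -/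
open scoped BigOperators

section helpers
variable {g : ℕ} {U : Set (Fin g → ℂ)} {f h : (Fin g → ℂ) → ℂ} {x : Fin g → ℂ}

lemma pd_analyticOnNhd (hf : AnalyticOnNhd ℂ f U) (i : Fin g) :
    AnalyticOnNhd ℂ (pd i f) U := fun y hy => by
  have := ((ContinuousLinearMap.apply ℂ ℂ (Pi.single i 1)).analyticAt
    (fderiv ℂ f y)).comp ((hf y hy).fderiv)
  exact this

lemma pdList_analyticOnNhd (hf : AnalyticOnNhd ℂ f U) (l : List (Fin g)) :
    AnalyticOnNhd ℂ (pdList l f) U := by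
  induction l with
  | nil => exact hf
  | cons a t ih => exact pd_analyticOnNhd ih a

lemma pd_congr_nhds {i : Fin g} (hfh : f =ᶠ[nhds x] h) : pd i f x = pd i h x := by
  unfold pd; rw [hfh.fderiv_eq]

lemma pd_add {i : Fin g} (hf : DifferentiableAt ℂ f x) (hh : DifferentiableAt ℂ h x) :
    pd i (fun y => f y + h y) x = pd i f x + pd i h x := by
  unfold pd; rw [fderiv_fun_add hf hh]; simp

lemma pd_sub {i : Fin g} (hf : DifferentiableAt ℂ f x) (hh : DifferentiableAt ℂ h x) :
    pd i (fun y => f y - h y) x = pd i f x - pd i h x := by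
  unfold pd; rw [fderiv_fun_sub hf hh]; simp

lemma pd_mul {i : Fin g} (hf : DifferentiableAt ℂ f x) (hh : DifferentiableAt ℂ h x) :
    pd i (fun y => f y * h y) x = pd i f x * h x + f x * pd i h x := by
  unfold pd; rw [fderiv_fun_mul hf hh]; simp; ring

lemma pd_const {i : Fin g} (c : ℂ) : pd i (fun _ => c) x = 0 := by
  unfold pd; rw [fderiv_fun_const]; simp

lemma pd_inv {i : Fin g} (hf : DifferentiableAt ℂ f x) (h0 : f x ≠ 0) :
    pd i (fun y => (f y)⁻¹) x = -(pd i f x) * ((f x)⁻¹ * (f x)⁻¹) := by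
  unfold pd
  have H := (hasFDerivAt_inv h0).comp x hf.hasFDerivAt
  rw [Function.comp_def] at H
  rw [H.fderiv]
  simp only [ContinuousLinearMap.coe_comp', Function.comp_apply,
    ContinuousLinearMap.smulRight_apply, ContinuousLinearMap.toSpanSingleton_apply, ContinuousLinearMap.one_apply, smul_eq_mul, sq, mul_inv]
  ring

lemma pd_div {i : Fin g} (hf : DifferentiableAt ℂ f x) (hh : DifferentiableAt ℂ h x)
    (h0 : h x ≠ 0) :
    pd i (fun y => f y / h y) x = (pd i f x * h x - f x * pd i h x) / h x ^ 2 := by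
  have hinv : DifferentiableAt ℂ (fun y => (h y)⁻¹) x := by fun_prop (disch := assumption)
  have e : (fun y => f y / h y) = fun y => f y * (h y)⁻¹ := by
    funext y; rw [div_eq_mul_inv]
  rw [e, pd_mul hf hinv, pd_inv hh h0]
  field_simp
  ring

lemma pd_comm (hU : IsOpen U) (hf : AnalyticOnNhd ℂ f U) (hx : x ∈ U) (a b : Fin g) :
    pd a (pd b f) x = pd b (pd a f) x := by
  have hev : ∀ᶠ y in nhds x, HasFDerivAt f (fderiv ℂ f y) y := by
    filter_upwards [hU.mem_nhds hx] with y hy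
    exact ((hf y hy).differentiableAt).hasFDerivAt
  have h2 : AnalyticAt ℂ (fderiv ℂ f) x := (hf x hx).fderiv
  have hsymm := second_derivative_symmetric_of_eventually hev h2.differentiableAt.hasFDerivAt
  have expand : ∀ v w : Fin g → ℂ,
      fderiv ℂ (fun y => fderiv ℂ f y v) x w = fderiv ℂ (fderiv ℂ f) x w v := by
    intro v w
    rw [fderiv_clm_apply h2.differentiableAt (differentiableAt_const v)]
    simp
  show fderiv ℂ (fun y => fderiv ℂ f y (Pi.single b 1)) x (Pi.single a 1) = _
  rw [expand, hsymm]
  exact (expand _ _).symm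

lemma pdList_perm (hU : IsOpen U) (hf : AnalyticOnNhd ℂ f U) {l1 l2 : List (Fin g)}
    (hp : l1.Perm l2) : ∀ y ∈ U, pdList l1 f y = pdList l2 f y := by
  induction hp with
  | nil => intro y _; rfl
  | cons a hperm ih =>
      intro y hy
      show pd a _ y = pd a _ y
      exact pd_congr_nhds (by filter_upwards [hU.mem_nhds hy] with z hz using ih z hz)
  | swap a b t =>
      intro y hy
      exact pd_comm hU (pdList_analyticOnNhd hf t) hy b a
  | trans h1 h2 ih1 ih2 => intro y hy; rw [ih1 y hy, ih2 y hy]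
end helpers

set_option maxHeartbeats 1000000 in
lemma hirota4 {g : ℕ} (σ : (Fin g → ℂ) → ℂ) (u : Fin g → ℂ) (i j k l : Fin g) :
    hirotaDiag σ [i,j,k,l] u =
      2 * (σ u * pd i (pd j (pd k (pd l σ))) u)
      - 2 * (pd i σ u * pd j (pd k (pd l σ)) u) - 2 * (pd j σ u * pd i (pd k (pd l σ)) u)
      - 2 * (pd k σ u * pd i (pd j (pd l σ)) u) - 2 * (pd l σ u * pd i (pd j (pd k σ)) u)
      + 2 * (pd i (pd j σ) u * pd k (pd l σ) u) + 2 * (pd i (pd k σ) u * pd j (pd l σ) u)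
      + 2 * (pd i (pd l σ) u * pd j (pd k σ) u) := by
  show (∑ S : Finset (Fin 4), (-1 : ℂ) ^ S.card
      * pdList (((List.finRange 4).filter (fun k => decide (k ∈ S))).map [i,j,k,l].get) σ u
      * pdList (((List.finRange 4).filter (fun k => decide (k ∉ S))).map [i,j,k,l].get) σ u) = _
  rw [show (Finset.univ : Finset (Finset (Fin 4))) =
    {∅, {0}, {1}, {2}, {3}, {0,1}, {0,2}, {0,3}, {1,2}, {1,3}, {2,3}, {0,1,2}, {0,1,3}, {0,2,3}, {1,2,3}, {0,1,2,3}} from by decide]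
  rw [Finset.sum_insert (by decide), Finset.sum_insert (by decide), Finset.sum_insert (by decide),
    Finset.sum_insert (by decide), Finset.sum_insert (by decide), Finset.sum_insert (by decide),
    Finset.sum_insert (by decide), Finset.sum_insert (by decide), Finset.sum_insert (by decide),
    Finset.sum_insert (by decide), Finset.sum_insert (by decide), Finset.sum_insert (by decide),
    Finset.sum_insert (by decide), Finset.sum_insert (by decide), Finset.sum_insert (by decide),
    Finset.sum_singleton]
  simp only [    show ((List.finRange 4).filter (fun x => decide (x ∈ (∅ : Finset (Fin 4))))).map ([i,j,k,l].get) = [] from rfl,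
    show ((List.finRange 4).filter (fun x => decide (x ∉ (∅ : Finset (Fin 4))))).map ([i,j,k,l].get) = [i,j,k,l] from rfl,
    show ((∅ : Finset (Fin 4))).card = 0 from rfl,
    show ((List.finRange 4).filter (fun x => decide (x ∈ ({0} : Finset (Fin 4))))).map ([i,j,k,l].get) = [i] from rfl,
    show ((List.finRange 4).filter (fun x => decide (x ∉ ({0} : Finset (Fin 4))))).map ([i,j,k,l].get) = [j,k,l] from rfl,
    show (({0} : Finset (Fin 4))).card = 1 from rfl,
    show ((List.finRange 4).filter (fun x => decide (x ∈ ({1} : Finset (Fin 4))))).map ([i,j,k,l].get) = [j] from rfl,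
    show ((List.finRange 4).filter (fun x => decide (x ∉ ({1} : Finset (Fin 4))))).map ([i,j,k,l].get) = [i,k,l] from rfl,
    show (({1} : Finset (Fin 4))).card = 1 from rfl,
    show ((List.finRange 4).filter (fun x => decide (x ∈ ({2} : Finset (Fin 4))))).map ([i,j,k,l].get) = [k] from rfl,
    show ((List.finRange 4).filter (fun x => decide (x ∉ ({2} : Finset (Fin 4))))).map ([i,j,k,l].get) = [i,j,l] from rfl,
    show (({2} : Finset (Fin 4))).card = 1 from rfl,
    show ((List.finRange 4).filter (fun x => decide (x ∈ ({3} : Finset (Fin 4))))).map ([i,j,k,l].get) = [l] from rfl,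
    show ((List.finRange 4).filter (fun x => decide (x ∉ ({3} : Finset (Fin 4))))).map ([i,j,k,l].get) = [i,j,k] from rfl,
    show (({3} : Finset (Fin 4))).card = 1 from rfl,
    show ((List.finRange 4).filter (fun x => decide (x ∈ ({0,1} : Finset (Fin 4))))).map ([i,j,k,l].get) = [i,j] from rfl,
    show ((List.finRange 4).filter (fun x => decide (x ∉ ({0,1} : Finset (Fin 4))))).map ([i,j,k,l].get) = [k,l] from rfl,
    show (({0,1} : Finset (Fin 4))).card = 2 from rfl,
    show ((List.finRange 4).filter (fun x => decide (x ∈ ({0,2} : Finset (Fin 4))))).map ([i,j,k,l].get) = [i,k] from rfl,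
    show ((List.finRange 4).filter (fun x => decide (x ∉ ({0,2} : Finset (Fin 4))))).map ([i,j,k,l].get) = [j,l] from rfl,
    show (({0,2} : Finset (Fin 4))).card = 2 from rfl,
    show ((List.finRange 4).filter (fun x => decide (x ∈ ({0,3} : Finset (Fin 4))))).map ([i,j,k,l].get) = [i,l] from rfl,
    show ((List.finRange 4).filter (fun x => decide (x ∉ ({0,3} : Finset (Fin 4))))).map ([i,j,k,l].get) = [j,k] from rfl,
    show (({0,3} : Finset (Fin 4))).card = 2 from rfl,
    show ((List.finRange 4).filter (fun x => decide (x ∈ ({1,2} : Finset (Fin 4))))).map ([i,j,k,l].get) = [j,k] from rfl,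
    show ((List.finRange 4).filter (fun x => decide (x ∉ ({1,2} : Finset (Fin 4))))).map ([i,j,k,l].get) = [i,l] from rfl,
    show (({1,2} : Finset (Fin 4))).card = 2 from rfl,
    show ((List.finRange 4).filter (fun x => decide (x ∈ ({1,3} : Finset (Fin 4))))).map ([i,j,k,l].get) = [j,l] from rfl,
    show ((List.finRange 4).filter (fun x => decide (x ∉ ({1,3} : Finset (Fin 4))))).map ([i,j,k,l].get) = [i,k] from rfl,
    show (({1,3} : Finset (Fin 4))).card = 2 from rfl,
    show ((List.finRange 4).filter (fun x => decide (x ∈ ({2,3} : Finset (Fin 4))))).map ([i,j,k,l].get) = [k,l] from rfl,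
    show ((List.finRange 4).filter (fun x => decide (x ∉ ({2,3} : Finset (Fin 4))))).map ([i,j,k,l].get) = [i,j] from rfl,
    show (({2,3} : Finset (Fin 4))).card = 2 from rfl,
    show ((List.finRange 4).filter (fun x => decide (x ∈ ({0,1,2} : Finset (Fin 4))))).map ([i,j,k,l].get) = [i,j,k] from rfl,
    show ((List.finRange 4).filter (fun x => decide (x ∉ ({0,1,2} : Finset (Fin 4))))).map ([i,j,k,l].get) = [l] from rfl,
    show (({0,1,2} : Finset (Fin 4))).card = 3 from rfl,
    show ((List.finRange 4).filter (fun x => decide (x ∈ ({0,1,3} : Finset (Fin 4))))).map ([i,j,k,l].get) = [i,j,l] from rfl,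
    show ((List.finRange 4).filter (fun x => decide (x ∉ ({0,1,3} : Finset (Fin 4))))).map ([i,j,k,l].get) = [k] from rfl,
    show (({0,1,3} : Finset (Fin 4))).card = 3 from rfl,
    show ((List.finRange 4).filter (fun x => decide (x ∈ ({0,2,3} : Finset (Fin 4))))).map ([i,j,k,l].get) = [i,k,l] from rfl,
    show ((List.finRange 4).filter (fun x => decide (x ∉ ({0,2,3} : Finset (Fin 4))))).map ([i,j,k,l].get) = [j] from rfl,
    show (({0,2,3} : Finset (Fin 4))).card = 3 from rfl,
    show ((List.finRange 4).filter (fun x => decide (x ∈ ({1,2,3} : Finset (Fin 4))))).map ([i,j,k,l].get) = [j,k,l] from rfl,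
    show ((List.finRange 4).filter (fun x => decide (x ∉ ({1,2,3} : Finset (Fin 4))))).map ([i,j,k,l].get) = [i] from rfl,
    show (({1,2,3} : Finset (Fin 4))).card = 3 from rfl,
    show ((List.finRange 4).filter (fun x => decide (x ∈ ({0,1,2,3} : Finset (Fin 4))))).map ([i,j,k,l].get) = [i,j,k,l] from rfl,
    show ((List.finRange 4).filter (fun x => decide (x ∉ ({0,1,2,3} : Finset (Fin 4))))).map ([i,j,k,l].get) = [] from rfl,
    show (({0,1,2,3} : Finset (Fin 4))).card = 4 from rfl]
  simp only [pdList, List.foldr_cons, List.foldr_nil]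
  norm_num
  ring

set_option maxHeartbeats 4000000 in
/-- the 4-index Q-function in terms of Kleinian ℘-functions. -/
theorem four_index_Q_in_terms_of_wp {g : ℕ} (hg : 1 ≤ g) (U : Set (Fin g → ℂ)) (hU : IsOpen U)
    (σ : (Fin g → ℂ) → ℂ) (hσ : AnalyticOnNhd ℂ σ U) (u : Fin g → ℂ) (hu : u ∈ U)
    (hσ0 : σ u ≠ 0) (i j k l : Fin g) :
    Qfun σ [i, j, k, l] u =
      wpN σ i j [k, l] u
      - 2 * wp2 σ i j u * wp2 σ k l u
      - 2 * wp2 σ i k u * wp2 σ j l u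
      - 2 * wp2 σ i l u * wp2 σ j k u := by
  -- differentiability of iterated partials
  have hD : ∀ (L : List (Fin g)), ∀ y ∈ U, DifferentiableAt ℂ (pdList L σ) y :=
    fun L y hy => ((pdList_analyticOnNhd hσ L) y hy).differentiableAt
  -- the set where σ ≠ 0 is an open neighbourhood of u
  have hWopen : IsOpen {y | y ∈ U ∧ σ y ≠ 0} := by
    rw [isOpen_iff_mem_nhds]
    rintro y ⟨hyU, hy0⟩
    filter_upwards [hU.mem_nhds hyU,
      (hσ y hyU).continuousAt.preimage_mem_nhds (compl_singleton_mem_nhds hy0)] with z h1 h2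
    exact ⟨h1, h2⟩
  have huW : u ∈ {y | y ∈ U ∧ σ y ≠ 0} := ⟨hu, hσ0⟩
  -- product form of wp2
  have hwp2 : wp2 σ i j =
      fun y => (pd i σ y * pd j σ y - σ y * pd i (pd j σ) y) / (σ y * σ y) := by
    funext y
    simp only [wp2, pow_two]
  -- first derivative of wp2 on the set where σ ≠ 0
  have hd1 : ∀ y, y ∈ U → σ y ≠ 0 →
      pd l (wp2 σ i j) y =
        ((pd l (pd i σ) y * pd j σ y + pd i σ y * pd l (pd j σ) y
          - pd l σ y * pd i (pd j σ) y - σ y * pd l (pd i (pd j σ)) y) * σ y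
         - 2 * (pd i σ y * pd j σ y - σ y * pd i (pd j σ) y) * pd l σ y)
        / (σ y * (σ y * σ y)) := by
    intro y hy hy0
    have d0 : DifferentiableAt ℂ σ y := hD [] y hy
    have d1 : DifferentiableAt ℂ (pd i σ) y := hD [i] y hy
    have d2 : DifferentiableAt ℂ (pd j σ) y := hD [j] y hy
    have d3 : DifferentiableAt ℂ (pd i (pd j σ)) y := hD [i, j] y hy
    have hyy : σ y * σ y ≠ 0 := mul_ne_zero hy0 hy0
    rw [hwp2]
    simp (disch := first | assumption | fun_prop (disch := assumption)) only
      [pd_div, pd_mul, pd_sub]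
    field_simp
    ring
  -- second derivative at u, via locality of fderiv
  have hkl : wpN σ i j [k, l] u =
      pd k (fun y =>
        ((pd l (pd i σ) y * pd j σ y + pd i σ y * pd l (pd j σ) y
          - pd l σ y * pd i (pd j σ) y - σ y * pd l (pd i (pd j σ)) y) * σ y
         - 2 * (pd i σ y * pd j σ y - σ y * pd i (pd j σ) y) * pd l σ y)
        / (σ y * (σ y * σ y))) u :=
    pd_congr_nhds (by
      filter_upwards [hWopen.mem_nhds huW] with y hy using hd1 y hy.1 hy.2)
  -- commutation of partial derivatives : canonical ordering
  have e1 : pd k (pd i σ) u = pd i (pd k σ) u :=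
    pdList_perm hU hσ (List.perm_append_comm (l₁ := [k]) (l₂ := [i])) u hu
  have e2 : pd k (pd j σ) u = pd j (pd k σ) u :=
    pdList_perm hU hσ (List.perm_append_comm (l₁ := [k]) (l₂ := [j])) u hu
  have e3 : pd l (pd i σ) u = pd i (pd l σ) u :=
    pdList_perm hU hσ (List.perm_append_comm (l₁ := [l]) (l₂ := [i])) u hu
  have e4 : pd l (pd j σ) u = pd j (pd l σ) u :=
    pdList_perm hU hσ (List.perm_append_comm (l₁ := [l]) (l₂ := [j])) u hu
  have e5 : pd k (pd l (pd i σ)) u = pd i (pd k (pd l σ)) u :=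
    pdList_perm hU hσ (List.perm_append_comm (l₁ := [k, l]) (l₂ := [i])) u hu
  have e6 : pd k (pd l (pd j σ)) u = pd j (pd k (pd l σ)) u :=
    pdList_perm hU hσ (List.perm_append_comm (l₁ := [k, l]) (l₂ := [j])) u hu
  have e7 : pd k (pd i (pd j σ)) u = pd i (pd j (pd k σ)) u :=
    pdList_perm hU hσ (List.perm_append_comm (l₁ := [k]) (l₂ := [i, j])) u hu
  have e8 : pd l (pd i (pd j σ)) u = pd i (pd j (pd l σ)) u :=
    pdList_perm hU hσ (List.perm_append_comm (l₁ := [l]) (l₂ := [i, j])) u hu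
  have e9 : pd k (pd l (pd i (pd j σ))) u = pd i (pd j (pd k (pd l σ))) u :=
    pdList_perm hU hσ (List.perm_append_comm (l₁ := [k, l]) (l₂ := [i, j])) u hu
  -- differentiability facts at u
  have d0 : DifferentiableAt ℂ σ u := hD [] u hu
  have d1 : DifferentiableAt ℂ (pd i σ) u := hD [i] u hu
  have d2 : DifferentiableAt ℂ (pd j σ) u := hD [j] u hu
  have d3 : DifferentiableAt ℂ (pd k σ) u := hD [k] u hu
  have d4 : DifferentiableAt ℂ (pd l σ) u := hD [l] u hu
  have d5 : DifferentiableAt ℂ (pd i (pd j σ)) u := hD [i, j] u hu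
  have d6 : DifferentiableAt ℂ (pd l (pd i σ)) u := hD [l, i] u hu
  have d7 : DifferentiableAt ℂ (pd l (pd j σ)) u := hD [l, j] u hu
  have d8 : DifferentiableAt ℂ (pd l (pd i (pd j σ))) u := hD [l, i, j] u hu
  have hu3 : σ u * (σ u * σ u) ≠ 0 := mul_ne_zero hσ0 (mul_ne_zero hσ0 hσ0)
  -- clean closed form for the 4-index ℘-function
  have hwpN : wpN σ i j [k, l] u =
      ((pd i (pd k (pd l σ)) u * pd j σ u + pd i (pd l σ) u * pd j (pd k σ) u
          + pd i (pd k σ) u * pd j (pd l σ) u + pd i σ u * pd j (pd k (pd l σ)) u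
          - pd k (pd l σ) u * pd i (pd j σ) u - pd l σ u * pd i (pd j (pd k σ)) u
          - pd k σ u * pd i (pd j (pd l σ)) u - σ u * pd i (pd j (pd k (pd l σ))) u) * σ u ^ 2
        - 2 * (pd k σ u * (pd i (pd l σ) u * pd j σ u + pd i σ u * pd j (pd l σ) u
                - pd l σ u * pd i (pd j σ) u - σ u * pd i (pd j (pd l σ)) u)
             + pd l σ u * (pd i (pd k σ) u * pd j σ u + pd i σ u * pd j (pd k σ) u
                - pd k σ u * pd i (pd j σ) u - σ u * pd i (pd j (pd k σ)) u)
             + pd k (pd l σ) u * (pd i σ u * pd j σ u - σ u * pd i (pd j σ) u)) * σ u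
        + 6 * pd k σ u * pd l σ u * (pd i σ u * pd j σ u - σ u * pd i (pd j σ) u))
      / σ u ^ 4 := by
    rw [hkl]
    simp (disch := first | assumption | fun_prop (disch := assumption)) only
      [pd_div, pd_mul, pd_sub, pd_add, pd_const]
    rw [e1, e2, e3, e4, e5, e6, e7, e8, e9]
    field_simp
    ring
  -- expand remaining definitions and finish by algebra
  rw [hwpN, Qfun, hirota4]
  simp only [wp2]
  have L1 : ∀ H : ℂ, -(1 / (2 * σ u ^ 2)) * H = -H / (2 * σ u ^ 2) := fun H => by ring
  have L2 : ∀ E A B C D F G : ℂ,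
      E / σ u ^ 4 - 2 * (A / σ u ^ 2) * (B / σ u ^ 2) - 2 * (C / σ u ^ 2) * (D / σ u ^ 2)
        - 2 * (F / σ u ^ 2) * (G / σ u ^ 2)
      = (E - 2 * A * B - 2 * C * D - 2 * F * G) / σ u ^ 4 := fun _ _ _ _ _ _ _ => by ring
  rw [L1, L2, div_eq_div_iff (mul_ne_zero two_ne_zero (pow_ne_zero _ hσ0)) (pow_ne_zero _ hσ0)]
  ring
end

section
/- Let n and s be coprime natural numbers with n, s ≥ 2. Then the number of natural numbers not representable in the form an + bs with a, b ∈ ℕ (nonnegative integers) is exactly (n−1)(s−1)/2. (This is the count of Weierstrass gap numbers for the pair (n,s), and equals the genus g = (n−1)(s−1)/2 of the (n,s)-curve.) -/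
/-- for coprime `n, s ≥ 2`, the number of natural numbers not representable
as `an + bs` with `a, b ∈ ℕ` (the Weierstrass gap numbers of the pair `(n,s)`) is exactly
`(n−1)(s−1)/2`, the genus of the `(n,s)`-curve. -/
theorem card_gap_sequence (n s : ℕ) (hn : 2 ≤ n) (hs : 2 ≤ s) (hcop : Nat.Coprime n s) :
    {m : ℕ | ¬ ∃ a b : ℕ, m = a * n + b * s}.Finite ∧
    {m : ℕ | ¬ ∃ a b : ℕ, m = a * n + b * s}.ncard = (n - 1) * (s - 1) / 2 := by
  classical
  set rep : ℕ → Prop := fun m => ∃ a b : ℕ, m = a * n + b * s with hrepdef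
  have hns : n + s ≤ n * s := Nat.add_le_mul hn hs
  have h1 : n ≤ n * s := Nat.le_mul_of_pos_right n (by omega)
  have h2 : s ≤ n * s - n := Nat.le_sub_of_add_le (by linarith)
  set F := n * s - n - s with hF
  have hF' : F + s + n = n * s := by
    rw [hF, Nat.sub_add_cancel h2, Nat.sub_add_cancel h1]
  -- existence of residues
  obtain ⟨t, -, ht⟩ := Nat.exists_mul_mod_eq_one_of_coprime hcop.symm (by omega)
  have hst : s * t ≡ 1 [MOD n] := by
    show s * t % n = 1 % n
    rw [ht, Nat.mod_eq_of_lt (by omega)]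
  have hres : ∀ m : ℕ, ∃ b, b < n ∧ m ≡ b * s [MOD n] := by
    intro m
    refine ⟨m * t % n, Nat.mod_lt _ (by omega), ?_⟩
    have e1 : m * t % n * s ≡ m * t * s [MOD n] := (Nat.mod_modEq (m * t) n).mul_right s
    have e2 : m * t * s = m * (s * t) := by ring
    have e3 : m * (s * t) ≡ m * 1 [MOD n] := hst.mul_left m
    have : m * t % n * s ≡ m [MOD n] := by
      calc m * t % n * s ≡ m * t * s [MOD n] := e1
        _ = m * (s * t) := e2
        _ ≡ m * 1 [MOD n] := e3
        _ = m := mul_one m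
    exact this.symm
  -- uniqueness of residues
  have huniq : ∀ b c : ℕ, b < n → c < n → b * s ≡ c * s [MOD n] → b = c := by
    intro b c hb hc h
    have := Nat.ModEq.cancel_right_of_coprime (by exact hcop) h
    simpa [Nat.ModEq, Nat.mod_eq_of_lt hb, Nat.mod_eq_of_lt hc] using this
  -- F is not representable
  have notrepF : ¬ rep F := by
    rintro ⟨a, b, hab⟩
    have hFr := (frobeniusNumber_pair hcop hn hs).1
    apply hFr
    rw [AddSubmonoid.mem_closure_pair]
    exact ⟨a, b, by simp only [smul_eq_mul]; exact hab.symm⟩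
  -- key characterization: rep m ↔ b*s ≤ m where b is the residue of m
  have key1 : ∀ m b : ℕ, b < n → m ≡ b * s [MOD n] → (rep m ↔ b * s ≤ m) := by
    intro m b hb hmb
    constructor
    · rintro ⟨a, c, rfl⟩
      have h3 : c * s ≡ a * n + c * s [MOD n] :=
        (Nat.modEq_iff_dvd' le_add_self).mpr ⟨a, by rw [Nat.add_sub_cancel, mul_comm]⟩
      have h4 : c % n * s ≡ c * s [MOD n] := (Nat.mod_modEq c n).mul_right s
      have h5 : b * s ≡ c % n * s [MOD n] := hmb.symm.trans (h3.symm.trans h4.symm)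
      have hbe : b = c % n := huniq b (c % n) hb (Nat.mod_lt c (by omega)) h5
      calc b * s ≤ c * s := by
            rw [hbe]; exact Nat.mul_le_mul_right s (Nat.mod_le c n)
        _ ≤ a * n + c * s := le_add_self
    · intro hle
      obtain ⟨k, hk⟩ := (Nat.modEq_iff_dvd' hle).mp hmb.symm
      have hm : m = n * k + b * s := (Nat.sub_eq_iff_eq_add hle).mp hk
      exact ⟨k, b, by rw [hm, mul_comm]⟩
  -- symmetry: exactly one of m, F - m is representable
  have key2 : ∀ m m' : ℕ, m + m' = F → (rep m ↔ ¬ rep m') := by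
    intro m m' hmm'
    obtain ⟨b, hb, hmb⟩ := hres m
    constructor
    · rintro ⟨a, c, hme⟩ ⟨a', c', hm'e⟩
      apply notrepF
      exact ⟨a + a', c + c', by rw [← hmm', hme, hm'e]; ring⟩
    · intro hnr'
      by_contra hnr
      -- m is not representable, so m < b*s
      have hlt : ¬ b * s ≤ m := fun h => hnr ((key1 m b hb hmb).mpr h)
      push_neg at hlt
      obtain ⟨k, hk⟩ := (Nat.modEq_iff_dvd' hlt.le).mp hmb
      have hbs : b * s = n * k + m := (Nat.sub_eq_iff_eq_add hlt.le).mp hk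
      have hk1 : 1 ≤ k := by
        rcases Nat.eq_zero_or_pos k with h | h
        · subst h; rw [Nat.mul_zero, Nat.zero_add] at hbs; exact absurd hbs hlt.ne'
        · exact h
      obtain ⟨k', rfl⟩ : ∃ k', k = k' + 1 := ⟨k - 1, by omega⟩
      set c := n - 1 - b with hcdef
      have hc : b + c + 1 = n := by omega
      have e1 : n * s = b * s + c * s + s := by rw [← hc]; ring
      have e2 : n * (k' + 1) = k' * n + n := by ring
      apply hnr'
      refine ⟨k', c, ?_⟩
      linarith [hmm', hF', hbs, e1, e2]
  -- all m > F are representable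
  have big : ∀ m : ℕ, F < m → rep m := by
    intro m hm
    obtain ⟨b, hb, hmb⟩ := hres m
    apply (key1 m b hb hmb).mpr
    by_contra hlt
    push_neg at hlt
    obtain ⟨k, hk⟩ := (Nat.modEq_iff_dvd' hlt.le).mp hmb
    have hbs : b * s = n * k + m := (Nat.sub_eq_iff_eq_add hlt.le).mp hk
    have hk1 : 1 ≤ k := by
      rcases Nat.eq_zero_or_pos k with h | h
      · subst h; rw [Nat.mul_zero, Nat.zero_add] at hbs; exact absurd hbs hlt.ne'
      · exact h
    have hbub : b * s ≤ (n - 1) * s := Nat.mul_le_mul_right s (by omega)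
    have e1 : (n - 1) * s + s = n * s := by
      rw [Nat.sub_one_mul, Nat.sub_add_cancel (le_trans (by omega) hns)]
    have hnk : n ≤ n * k := Nat.le_mul_of_pos_right n hk1
    linarith
  -- counting
  set N := F + 1 with hNdef
  have hN : (n - 1) * (s - 1) = N := by
    obtain ⟨a, rfl⟩ : ∃ a, n = a + 2 := ⟨n - 2, by omega⟩
    obtain ⟨b, rfl⟩ : ∃ b, s = b + 2 := ⟨s - 2, by omega⟩
    have : (a + 2 - 1) * (b + 2 - 1) = (a + 1) * (b + 1) := rfl
    rw [this]
    have e : (a + 1) * (b + 1) + (a + 2) + (b + 2) = (a + 2) * (b + 2) + 1 := by ring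
    omega
  set G : Finset ℕ := (Finset.range N).filter (fun m => ¬ rep m) with hGdef
  set R : Finset ℕ := (Finset.range N).filter (fun m => rep m) with hRdef
  have hset : {m : ℕ | ¬ ∃ a b : ℕ, m = a * n + b * s} = ↑G := by
    ext m
    simp only [hGdef, Finset.coe_filter, Set.mem_setOf_eq, Finset.mem_range]
    constructor
    · intro h
      refine ⟨?_, h⟩
      by_contra hlt
      exact h (big m (by omega))
    · exact fun h => h.2
  have hcard : G.card = R.card := by
    apply Finset.card_bij (fun m _ => F - m)
    · intro m hm
      simp only [hGdef, Finset.mem_filter, Finset.mem_range] at hm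
      simp only [hRdef, Finset.mem_filter, Finset.mem_range]
      refine ⟨by omega, ?_⟩
      by_contra h'
      exact hm.2 ((key2 m (F - m) (by omega)).mpr h')
    · intro m1 hm1 m2 hm2 h
      simp only [hGdef, Finset.mem_filter, Finset.mem_range] at hm1 hm2
      omega
    · intro r hr
      simp only [hRdef, Finset.mem_filter, Finset.mem_range] at hr
      refine ⟨F - r, ?_, by omega⟩
      simp only [hGdef, Finset.mem_filter, Finset.mem_range]
      exact ⟨by omega, (key2 r (F - r) (by omega)).mp hr.2⟩
  have hsplit : R.card + G.card = N := by
    rw [hRdef, hGdef, Finset.card_filter_add_card_filter_not, Finset.card_range]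
  constructor
  · rw [hset]; exact G.finite_toSet
  · rw [hset, Set.ncard_coe_finset, hN]
    omega
end

section
/- Let g ≥ 1, let σ : (Fin g → ℂ) → ℂ be analytic on all of ℂ^g, let ℓ ∈ ℂ^g, and suppose there exist c ∈ ℂ with c ≠ 0, a ∈ ℂ^g and b ∈ ℂ such that σ(u + ℓ) = c·exp(Σ_{k} a_k u_k + b)·σ(u) for all u ∈ ℂ^g. Then for every even n and all indices i₁,…,iₙ, the n-index Q-function of σ is periodic with period ℓ: for every u ∈ ℂ^g with σ(u) ≠ 0, one has σ(u+ℓ) ≠ 0 and Q_{i₁…iₙ}(u + ℓ) = Q_{i₁…iₙ}(u). -/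
open scoped BigOperators

namespace QAux

variable {g : ℕ}

/-- Analyticity of the partial derivative. -/
lemma analytic_pd {f : (Fin g → ℂ) → ℂ} (hf : AnalyticOnNhd ℂ f Set.univ) (i : Fin g) :
    AnalyticOnNhd ℂ (pd i f) Set.univ := by
  have h1 : AnalyticOnNhd ℂ (fderiv ℂ f) Set.univ := hf.fderiv
  have h2 := ((ContinuousLinearMap.apply ℂ ℂ (Pi.single i (1 : ℂ))).analyticOnNhd
      (Set.univ : Set ((Fin g → ℂ) →L[ℂ] ℂ))).comp h1 (Set.mapsTo_univ _ _)
  exact h2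

lemma diffAt {f : (Fin g → ℂ) → ℂ} (hf : AnalyticOnNhd ℂ f Set.univ) (u : Fin g → ℂ) :
    DifferentiableAt ℂ f u := (hf u (Set.mem_univ u)).differentiableAt

lemma analytic_pdList {f : (Fin g → ℂ) → ℂ} (hf : AnalyticOnNhd ℂ f Set.univ)
    (m : List (Fin g)) : AnalyticOnNhd ℂ (pdList m f) Set.univ := by
  induction m with
  | nil => exact hf
  | cons i m ih => exact analytic_pd ih i

lemma pd_add {f h : (Fin g → ℂ) → ℂ} (i : Fin g) (u : Fin g → ℂ)
    (hf : DifferentiableAt ℂ f u) (hh : DifferentiableAt ℂ h u) :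
    pd i (fun x => f x + h x) u = pd i f u + pd i h u := by
  simp only [pd]
  rw [fderiv_fun_add hf hh]
  simp

lemma pd_const_mul {f : (Fin g → ℂ) → ℂ} (i : Fin g) (u : Fin g → ℂ) (c : ℂ)
    (hf : DifferentiableAt ℂ f u) :
    pd i (fun x => c * f x) u = c * pd i f u := by
  simp only [pd]
  rw [fderiv_const_mul hf c]
  simp

lemma pdList_add {f h : (Fin g → ℂ) → ℂ} (hf : AnalyticOnNhd ℂ f Set.univ)
    (hh : AnalyticOnNhd ℂ h Set.univ) (m : List (Fin g)) :
    pdList m (fun x => f x + h x) = fun u => pdList m f u + pdList m h u := by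
  induction m with
  | nil => rfl
  | cons i m ih =>
    show pd i (pdList m fun x => f x + h x) = _
    rw [ih]
    funext u
    exact pd_add i u (diffAt (analytic_pdList hf m) u) (diffAt (analytic_pdList hh m) u)

lemma pdList_const_mul {f : (Fin g → ℂ) → ℂ} (hf : AnalyticOnNhd ℂ f Set.univ) (c : ℂ)
    (m : List (Fin g)) :
    pdList m (fun x => c * f x) = fun u => c * pdList m f u := by
  induction m with
  | nil => rfl
  | cons i m ih =>
    show pd i (pdList m fun x => c * f x) = _
    rw [ih]
    funext u
    exact pd_const_mul i u c (diffAt (analytic_pdList hf m) u)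

lemma pdList_snoc (m : List (Fin g)) (j : Fin g) (f : (Fin g → ℂ) → ℂ) :
    pdList (m ++ [j]) f = pdList m (pd j f) := by
  simp [pdList, List.foldr_append]

/-- Translation invariance of partial derivatives. -/
lemma pd_translate {F : (Fin g → ℂ) → ℂ} (i : Fin g) (ℓ u : Fin g → ℂ)
    (hF : DifferentiableAt ℂ F (u + ℓ)) :
    pd i (fun x => F (x + ℓ)) u = pd i F (u + ℓ) := by
  have h2 : HasFDerivAt (fun x : Fin g → ℂ => x + ℓ)
      (ContinuousLinearMap.id ℂ (Fin g → ℂ)) u := (hasFDerivAt_id u).add_const ℓ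
  have h3 := hF.hasFDerivAt.comp u h2
  have h4 : HasFDerivAt (fun x => F (x + ℓ))
      ((fderiv ℂ F (u + ℓ)).comp (ContinuousLinearMap.id ℂ (Fin g → ℂ))) u := h3
  simp only [pd]
  rw [h4.fderiv]
  simp

lemma pdList_translate {f : (Fin g → ℂ) → ℂ} (hf : AnalyticOnNhd ℂ f Set.univ)
    (ℓ : Fin g → ℂ) (m : List (Fin g)) :
    ∀ u, pdList m (fun x => f (x + ℓ)) u = pdList m f (u + ℓ) := by
  induction m with
  | nil => intro u; rfl
  | cons i m ih =>
    intro u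
    show pd i (pdList m fun x => f (x + ℓ)) u = pd i (pdList m f) (u + ℓ)
    have hfun : pdList m (fun x => f (x + ℓ)) = fun x => pdList m f (x + ℓ) := funext ih
    rw [hfun]
    exact pd_translate i ℓ u (diffAt (analytic_pdList hf m) (u + ℓ))

/-- The continuous linear map `u ↦ ∑ k, a k * u k`. -/
noncomputable def Mlin (a : Fin g → ℂ) : (Fin g → ℂ) →L[ℂ] ℂ :=
  ∑ k, a k • (ContinuousLinearMap.proj k : (Fin g → ℂ) →L[ℂ] ℂ)

lemma Mlin_apply (a : Fin g → ℂ) (u : Fin g → ℂ) : Mlin a u = ∑ k, a k * u k := by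
  simp [Mlin, ContinuousLinearMap.sum_apply]

lemma Mlin_single (a : Fin g → ℂ) (i : Fin g) : Mlin a (Pi.single i 1) = a i := by
  rw [Mlin_apply]
  simp [Pi.single_apply]

/-- The quasi-periodicity factor. -/
noncomputable def Efun (c : ℂ) (a : Fin g → ℂ) (b : ℂ) : (Fin g → ℂ) → ℂ :=
  fun u => c * Complex.exp ((∑ k, a k * u k) + b)

lemma Efun_eq (c : ℂ) (a : Fin g → ℂ) (b : ℂ) :
    Efun c a b = fun u => c * Complex.exp (Mlin a u + b) := by
  funext u; rw [Efun, Mlin_apply]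

lemma Efun_ne (c : ℂ) (a : Fin g → ℂ) (b : ℂ) (hc : c ≠ 0) (u : Fin g → ℂ) :
    Efun c a b u ≠ 0 := mul_ne_zero hc (Complex.exp_ne_zero _)

lemma Efun_hasFDeriv (c : ℂ) (a : Fin g → ℂ) (b : ℂ) (u : Fin g → ℂ) :
    HasFDerivAt (Efun c a b) (Efun c a b u • Mlin a) u := by
  have h1 : HasFDerivAt (fun u : Fin g → ℂ => Mlin a u + b) (Mlin a) u :=
    (Mlin a).hasFDerivAt.add_const b
  have h3 := (h1.cexp).const_mul c
  rw [Efun_eq]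
  convert h3 using 1
  all_goals first | rfl | simp [smul_smul]

lemma analytic_Efun (c : ℂ) (a : Fin g → ℂ) (b : ℂ) :
    AnalyticOnNhd ℂ (Efun c a b) Set.univ := by
  have h1 : AnalyticOnNhd ℂ (fun u : Fin g → ℂ => Mlin a u + b) Set.univ :=
    ((Mlin a).analyticOnNhd Set.univ).add analyticOnNhd_const
  have h3 := (analyticOnNhd_const (v := c)).mul h1.cexp
  rw [Efun_eq]
  exact h3

lemma pd_Efun_mul (c : ℂ) (a : Fin g → ℂ) (b : ℂ) {f : (Fin g → ℂ) → ℂ} (i : Fin g)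
    (u : Fin g → ℂ) (hf : DifferentiableAt ℂ f u) :
    pd i (fun x => Efun c a b x * f x) u = Efun c a b u * (a i * f u + pd i f u) := by
  have hE := Efun_hasFDeriv c a b u
  simp only [pd]
  rw [fderiv_fun_mul hE.differentiableAt hf, hE.fderiv]
  simp only [ContinuousLinearMap.add_apply, ContinuousLinearMap.smul_apply, smul_eq_mul,
    Mlin_single]
  ring

/-- The Hirota bilinear diagonal, as a bilinear expression in two functions. -/
noncomputable def Hb (n : ℕ) (v : Fin n → Fin g) (f h : (Fin g → ℂ) → ℂ)
    (u : Fin g → ℂ) : ℂ :=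
  ∑ S : Finset (Fin n),
    (-1 : ℂ) ^ S.card
      * pdList (((List.finRange n).filter (fun k => decide (k ∈ S))).map v) f u
      * pdList (((List.finRange n).filter (fun k => decide (k ∉ S))).map v) h u

lemma hirotaDiag_eq (σ : (Fin g → ℂ) → ℂ) (l : List (Fin g)) (u : Fin g → ℂ) :
    hirotaDiag σ l u = Hb l.length l.get σ σ u := rfl

lemma finRange_snoc (n : ℕ) :
    List.finRange (n + 1) = (List.finRange n).map Fin.castSucc ++ [Fin.last n] := by
  apply List.map_injective_iff.mpr Fin.val_injective
  simp [List.map_append, List.map_map, Function.comp_def, List.range_succ]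

lemma filter_finRange_succ (n : ℕ) (p : Fin (n + 1) → Bool) (v : Fin (n + 1) → Fin g) :
    ((List.finRange (n + 1)).filter p).map v
      = (((List.finRange n).filter (fun k => p k.castSucc)).map (fun k => v k.castSucc))
        ++ (if p (Fin.last n) then [v (Fin.last n)] else []) := by
  rw [finRange_snoc, List.filter_append, List.map_append]
  congr 1
  · rw [List.filter_map, List.map_map]
    rfl
  · rw [List.filter_singleton]
    by_cases hp : p (Fin.last n) <;> simp [hp]

/-- Inserting (or not) the last element into a subset of `Fin n` viewed in `Fin (n+1)`. -/
def ins (n : ℕ) (T : Finset (Fin n)) (b : Bool) : Finset (Fin (n + 1)) :=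
  if b then insert (Fin.last n) (T.map Fin.castSuccEmb) else T.map Fin.castSuccEmb

lemma last_not_mem_map (n : ℕ) (T : Finset (Fin n)) :
    Fin.last n ∉ T.map Fin.castSuccEmb := by
  intro hmem
  obtain ⟨x, -, hx⟩ := Finset.mem_map.mp hmem
  exact absurd hx (ne_of_lt (Fin.castSucc_lt_last x))

lemma mem_ins_last (n : ℕ) (T : Finset (Fin n)) (b : Bool) :
    Fin.last n ∈ ins n T b ↔ b = true := by
  cases b
  · simp only [ins, if_false, Bool.false_eq_true, iff_false]
    exact last_not_mem_map n T
  · simp [ins]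

lemma mem_ins_castSucc (n : ℕ) (T : Finset (Fin n)) (b : Bool) (k : Fin n) :
    k.castSucc ∈ ins n T b ↔ k ∈ T := by
  have hne : k.castSucc ≠ Fin.last n := ne_of_lt (Fin.castSucc_lt_last k)
  have hmem : k.castSucc ∈ T.map Fin.castSuccEmb ↔ k ∈ T := Finset.mem_map' _
  cases b <;> simp [ins, hne, hmem]

lemma card_ins_true (n : ℕ) (T : Finset (Fin n)) :
    (ins n T true).card = T.card + 1 := by
  simp [ins, Finset.card_insert_of_notMem (last_not_mem_map n T), Finset.card_map]

lemma card_ins_false (n : ℕ) (T : Finset (Fin n)) :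
    (ins n T false).card = T.card := by
  simp [ins, Finset.card_map]

lemma ins_bijective (n : ℕ) :
    Function.Bijective (fun p : Finset (Fin n) × Bool => ins n p.1 p.2) := by
  constructor
  · rintro ⟨T, b⟩ ⟨T', b'⟩ hEq
    simp only at hEq
    have hb : b = b' := by
      have h1 := mem_ins_last n T b
      rw [hEq, mem_ins_last] at h1
      cases b <;> cases b' <;> simp_all
    subst hb
    have hT : T = T' := by
      ext k
      rw [← mem_ins_castSucc n T b k, hEq, mem_ins_castSucc]
    rw [hT]
  · intro S
    refine ⟨⟨Finset.univ.filter (fun k => k.castSucc ∈ S), decide (Fin.last n ∈ S)⟩, ?_⟩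
    ext x
    rcases Fin.eq_castSucc_or_eq_last x with ⟨y, rfl⟩ | rfl
    · rw [mem_ins_castSucc]; simp
    · rw [mem_ins_last]
      by_cases hS : Fin.last n ∈ S <;> simp [hS]

lemma decide_castSucc_mem (n : ℕ) (T : Finset (Fin n)) (b : Bool) :
    (fun k : Fin n => decide (k.castSucc ∈ ins n T b)) = fun k => decide (k ∈ T) := by
  funext k
  exact decide_eq_decide.mpr (mem_ins_castSucc n T b k)

lemma decide_castSucc_not_mem (n : ℕ) (T : Finset (Fin n)) (b : Bool) :
    (fun k : Fin n => decide (k.castSucc ∉ ins n T b)) = fun k => decide (k ∉ T) := by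
  funext k
  exact decide_eq_decide.mpr (not_congr (mem_ins_castSucc n T b k))

lemma decide_last_mem (n : ℕ) (T : Finset (Fin n)) (b : Bool) :
    decide (Fin.last n ∈ ins n T b) = b := by
  cases b <;> simp [mem_ins_last]

lemma decide_last_not_mem (n : ℕ) (T : Finset (Fin n)) (b : Bool) :
    decide (Fin.last n ∉ ins n T b) = !b := by
  cases b <;> simp [mem_ins_last]

lemma Hb_succ (n : ℕ) (v : Fin (n + 1) → Fin g) (f h : (Fin g → ℂ) → ℂ) (u : Fin g → ℂ) :
    Hb (n + 1) v f h u
      = Hb n (fun k => v k.castSucc) f (pd (v (Fin.last n)) h) u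
        - Hb n (fun k => v k.castSucc) (pd (v (Fin.last n)) f) h u := by
  unfold Hb
  rw [← Fintype.sum_bijective _ (ins_bijective n)
      (fun p : Finset (Fin n) × Bool =>
        (-1 : ℂ) ^ (ins n p.1 p.2).card
          * pdList (((List.finRange (n + 1)).filter
              (fun k => decide (k ∈ ins n p.1 p.2))).map v) f u
          * pdList (((List.finRange (n + 1)).filter
              (fun k => decide (k ∉ ins n p.1 p.2))).map v) h u)
      _ (fun p => rfl)]
  rw [Fintype.sum_prod_type, ← Finset.sum_sub_distrib]
  refine Finset.sum_congr rfl fun T _ => ?_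
  rw [Fintype.sum_bool]
  have e1t : ((List.finRange (n + 1)).filter (fun k => decide (k ∈ ins n T true))).map v
      = (((List.finRange n).filter (fun k => decide (k ∈ T))).map (fun k => v k.castSucc))
        ++ [v (Fin.last n)] := by
    rw [filter_finRange_succ n _ v, decide_castSucc_mem, decide_last_mem]
    simp
  have e2t : ((List.finRange (n + 1)).filter (fun k => decide (k ∉ ins n T true))).map v
      = ((List.finRange n).filter (fun k => decide (k ∉ T))).map (fun k => v k.castSucc) := by
    rw [filter_finRange_succ n _ v, decide_castSucc_not_mem, decide_last_not_mem]
    simp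
  have e1f : ((List.finRange (n + 1)).filter (fun k => decide (k ∈ ins n T false))).map v
      = ((List.finRange n).filter (fun k => decide (k ∈ T))).map (fun k => v k.castSucc) := by
    rw [filter_finRange_succ n _ v, decide_castSucc_mem, decide_last_mem]
    simp
  have e2f : ((List.finRange (n + 1)).filter (fun k => decide (k ∉ ins n T false))).map v
      = (((List.finRange n).filter (fun k => decide (k ∉ T))).map (fun k => v k.castSucc))
        ++ [v (Fin.last n)] := by
    rw [filter_finRange_succ n _ v, decide_castSucc_not_mem, decide_last_not_mem]
    simp
  rw [e1t, e2t, e1f, e2f, card_ins_true, card_ins_false, pdList_snoc, pdList_snoc]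
  simp only [pow_succ]
  ring

lemma Hb_right (n : ℕ) (v : Fin n → Fin g) (f : (Fin g → ℂ) → ℂ) {h1 h2 : (Fin g → ℂ) → ℂ}
    (c0 : ℂ) (hh1 : AnalyticOnNhd ℂ h1 Set.univ) (hh2 : AnalyticOnNhd ℂ h2 Set.univ)
    (u : Fin g → ℂ) :
    Hb n v f (fun x => c0 * h1 x + h2 x) u = c0 * Hb n v f h1 u + Hb n v f h2 u := by
  unfold Hb
  rw [Finset.mul_sum, ← Finset.sum_add_distrib]
  refine Finset.sum_congr rfl fun S _ => ?_
  have e1 := pdList_add (f := fun x => c0 * h1 x) (h := h2)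
    (analyticOnNhd_const.mul hh1) hh2
    (((List.finRange n).filter (fun k => decide (k ∉ S))).map v)
  have e2 := pdList_const_mul hh1 c0 (((List.finRange n).filter (fun k => decide (k ∉ S))).map v)
  rw [e1]
  simp only [e2]
  ring

lemma Hb_left (n : ℕ) (v : Fin n → Fin g) (h : (Fin g → ℂ) → ℂ) {f1 f2 : (Fin g → ℂ) → ℂ}
    (c0 : ℂ) (hf1 : AnalyticOnNhd ℂ f1 Set.univ) (hf2 : AnalyticOnNhd ℂ f2 Set.univ)
    (u : Fin g → ℂ) :
    Hb n v (fun x => c0 * f1 x + f2 x) h u = c0 * Hb n v f1 h u + Hb n v f2 h u := by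
  unfold Hb
  rw [Finset.mul_sum, ← Finset.sum_add_distrib]
  refine Finset.sum_congr rfl fun S _ => ?_
  have e1 := pdList_add (f := fun x => c0 * f1 x) (h := f2)
    (analyticOnNhd_const.mul hf1) hf2
    (((List.finRange n).filter (fun k => decide (k ∈ S))).map v)
  have e2 := pdList_const_mul hf1 c0 (((List.finRange n).filter (fun k => decide (k ∈ S))).map v)
  rw [e1]
  simp only [e2]
  ring

lemma Hb_scale (c : ℂ) (a : Fin g → ℂ) (b : ℂ) :
    ∀ (n : ℕ) (v : Fin n → Fin g) (f h : (Fin g → ℂ) → ℂ),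
      AnalyticOnNhd ℂ f Set.univ → AnalyticOnNhd ℂ h Set.univ → ∀ u : Fin g → ℂ,
        Hb n v (fun x => Efun c a b x * f x) (fun x => Efun c a b x * h x) u
          = (Efun c a b u) ^ 2 * Hb n v f h u := by
  intro n
  induction n with
  | zero =>
    intro v f h hf hh u
    have hS : ∀ S : Finset (Fin 0), S = ∅ := fun S => Finset.eq_empty_of_isEmpty S
    have huniv : (Finset.univ : Finset (Finset (Fin 0))) = {∅} := by
      ext S
      constructor
      · intro _
        simp [hS S]
      · intro _
        exact Finset.mem_univ S
    unfold Hb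
    rw [huniv, Finset.sum_singleton, Finset.sum_singleton]
    simp [pdList]
    ring
  | succ n ih =>
    intro v f h hf hh u
    rw [Hb_succ, Hb_succ]
    set j := v (Fin.last n) with hj
    have hEf : pd j (fun x => Efun c a b x * f x)
        = fun x => Efun c a b x * (a j * f x + pd j f x) :=
      funext fun x => pd_Efun_mul c a b j x (diffAt hf x)
    have hEh : pd j (fun x => Efun c a b x * h x)
        = fun x => Efun c a b x * (a j * h x + pd j h x) :=
      funext fun x => pd_Efun_mul c a b j x (diffAt hh x)
    rw [hEf, hEh]
    have hh1 : AnalyticOnNhd ℂ (fun x => a j * h x + pd j h x) Set.univ :=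
      (analyticOnNhd_const.mul hh).add (analytic_pd hh j)
    have hf1 : AnalyticOnNhd ℂ (fun x => a j * f x + pd j f x) Set.univ :=
      (analyticOnNhd_const.mul hf).add (analytic_pd hf j)
    have i1 := ih (fun k => v k.castSucc) f (fun x => a j * h x + pd j h x) hf hh1 u
    have i2 := ih (fun k => v k.castSucc) (fun x => a j * f x + pd j f x) h hf1 hh u
    rw [i1, i2]
    rw [Hb_right n _ f (a j) hh (analytic_pd hh j) u,
      Hb_left n _ h (a j) hf (analytic_pd hf j) u]
    ring

end QAux

/-- quasi-periodicity of `σ` (with affine exponent) implies that every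
n-index Q-function of `σ` (`n` even) is periodic with period `ℓ`. -/
theorem Q_periodic_of_quasi_periodic {g : ℕ} (hg : 1 ≤ g) (σ : (Fin g → ℂ) → ℂ)
    (hσ : AnalyticOnNhd ℂ σ Set.univ) (ℓ : Fin g → ℂ)
    (c : ℂ) (hc : c ≠ 0) (a : Fin g → ℂ) (b : ℂ)
    (hqp : ∀ u : Fin g → ℂ, σ (u + ℓ) = c * Complex.exp ((∑ k, a k * u k) + b) * σ u) :
    ∀ (l : List (Fin g)), Even l.length →
      ∀ u : Fin g → ℂ, σ u ≠ 0 →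
        σ (u + ℓ) ≠ 0 ∧ Qfun σ l (u + ℓ) = Qfun σ l u := by
  intro l _ u hσu
  have hqp' : ∀ x : Fin g → ℂ, σ (x + ℓ) = QAux.Efun c a b x * σ x := fun x => hqp x
  have hEne : QAux.Efun c a b u ≠ 0 := QAux.Efun_ne c a b hc u
  have hσuℓ : σ (u + ℓ) ≠ 0 := by
    rw [hqp' u]
    exact mul_ne_zero hEne hσu
  refine ⟨hσuℓ, ?_⟩
  have key : hirotaDiag σ l (u + ℓ) = (QAux.Efun c a b u) ^ 2 * hirotaDiag σ l u := by
    rw [QAux.hirotaDiag_eq, QAux.hirotaDiag_eq]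
    have t1 : QAux.Hb l.length l.get σ σ (u + ℓ)
        = QAux.Hb l.length l.get (fun x => σ (x + ℓ)) (fun x => σ (x + ℓ)) u := by
      unfold QAux.Hb
      refine Finset.sum_congr rfl fun S _ => ?_
      rw [QAux.pdList_translate hσ ℓ _ u, QAux.pdList_translate hσ ℓ _ u]
    rw [t1]
    have t2 : (fun x => σ (x + ℓ)) = fun x => QAux.Efun c a b x * σ x := funext hqp'
    rw [t2]
    exact QAux.Hb_scale c a b l.length l.get σ σ hσ hσ u
  unfold Qfun
  rw [key, hqp' u]
  have h2 : (QAux.Efun c a b u * σ u) ^ 2 = QAux.Efun c a b u ^ 2 * σ u ^ 2 := by ring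
  rw [h2]
  field_simp
end
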